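/- If G is an abelian group with finite corank n, then G is isomorphic to ℤ^n ⊕ H for some abelian group H with corank H = 0. -/

import Mathlib

/-- The corank of an abelian group `G`: the supremum of the natural numbers `n` such that
there exists a surjective group homomorphism from `G` onto `ℤ^n`. -/
noncomputable def corank (G : Type) [AddCommGroup G] : ℕ∞ :=
  sSup {c : ℕ∞ | ∃ n : ℕ, c = (n : ℕ∞) ∧
    ∃ f : G →+ (Fin n → ℤ), Function.Surjective f}

/-- If `G` is an abelian group with finite corank `n`, then `G ≅ ℤ^n ⊕ H` for some
abelian group `H` with `corank H = 0`. -/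
theorem exists_decomposition_of_corank_finite (G : Type) [AddCommGroup G] (n : ℕ)
    (h : corank G = (n : ℕ∞)) :
    ∃ (H : Type) (_i : AddCommGroup H),
      Nonempty (G ≃+ ((Fin n → ℤ) × H)) ∧ corank H = 0 := by
  classical
  set S : Set ℕ∞ := {c : ℕ∞ | ∃ n : ℕ, c = (n : ℕ∞) ∧
    ∃ f : G →+ (Fin n → ℤ), Function.Surjective f} with hS
  have h0 : (0 : ℕ∞) ∈ S := by
    refine ⟨0, rfl, 0, fun v => ⟨0, ?_⟩⟩
    exact Subsingleton.elim _ _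
  have hsub : S ⊆ Set.Iic (n : ℕ∞) := by
    intro c hc
    have := le_sSup hc
    rw [show sSup S = corank G from rfl, h] at this
    exact this
  have hfin : (Set.Iic (n : ℕ∞)).Finite := by
    have : Set.Iic (n : ℕ∞) ⊆ (fun m : ℕ => (m : ℕ∞)) '' Set.Iic n := by
      intro c hc
      have hct : c ≠ ⊤ := ne_top_of_le_ne_top (by simp) hc
      lift c to ℕ using hct
      exact ⟨c, by simpa using hc, rfl⟩
    exact ((Set.finite_Iic n).image _).subset this
  have hn : (n : ℕ∞) ∈ S := by
    have : sSup S ∈ S := Set.Nonempty.csSup_mem ⟨0, h0⟩ (hfin.subset hsub)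
    rwa [show sSup S = corank G from rfl, h] at this
  obtain ⟨m, hm, f, hf⟩ := hn
  have hmn : m = n := by exact_mod_cast hm.symm
  subst hmn
  -- splitting
  let f' : G →ₗ[ℤ] (Fin m → ℤ) := f.toIntLinearMap
  have hf' : Function.Surjective f' := hf
  let s : (Fin m → ℤ) →ₗ[ℤ] G := LinearMap.splittingOfFunOnFintypeSurjective f' hf'
  have hs : ∀ v, f (s v) = v :=
    LinearMap.leftInverse_splittingOfFunOnFintypeSurjective f' hf'
  -- the complement
  refine ⟨f.ker, inferInstance, ?_, ?_⟩
  · refine ⟨{ toFun := fun g => (f g, ⟨g - s (f g), ?_⟩)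
              invFun := fun p => s p.1 + p.2.1
              left_inv := ?_
              right_inv := ?_
              map_add' := ?_ }⟩
    · simp [AddMonoidHom.mem_ker, map_sub, hs]
    · intro g; simp
    · rintro ⟨v, ⟨x, hx⟩⟩
      have hx' : f x = 0 := hx
      simp [hs, hx', map_add]
    · intro a b
      ext
      · simp [map_add]
      · simp only [map_add, Prod.mk_add_mk, AddSubgroup.coe_add]
        abel
  · -- corank of kernel is zero
    refine le_antisymm (sSup_le ?_) (zero_le)
    rintro c ⟨k, rfl, g, hg⟩
    -- build a surjection G →+ (Fin (m + k) → ℤ)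
    let q : G → f.ker := fun x => ⟨x - s (f x), by simp [AddMonoidHom.mem_ker, map_sub, hs]⟩
    let F : G →+ (Fin (m + k) → ℤ) :=
      { toFun := fun x => Fin.append (f x) (g (q x))
        map_zero' := by
          have : q 0 = 0 := by simp [q]
          funext i
          refine Fin.addCases (fun i => ?_) (fun i => ?_) i <;>
            simp [this, Fin.append_left, Fin.append_right]
        map_add' := by
          intro a b
          have hq : q (a + b) = q a + q b := by
            apply Subtype.ext
            simp only [q, map_add, AddSubgroup.coe_add]
            abel
          funext i
          refine Fin.addCases (fun i => ?_) (fun i => ?_) i <;>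
            simp [hq, Fin.append_left, Fin.append_right, map_add] }
    have hF : Function.Surjective F := by
      intro w
      obtain ⟨y, hy⟩ := hg (fun j => w (Fin.natAdd m j))
      refine ⟨s (fun i => w (Fin.castAdd k i)) + y.1, ?_⟩
      have hfy : f y.1 = 0 := y.2
      have h1 : f (s (fun i => w (Fin.castAdd k i)) + y.1) = fun i => w (Fin.castAdd k i) := by
        simp [map_add, hs, hfy]
      have h2 : q (s (fun i => w (Fin.castAdd k i)) + y.1) = y := by
        apply Subtype.ext
        simp only [q, h1]
        abel
      show Fin.append _ _ = w
      rw [h1, h2, hy]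
      funext i
      refine Fin.addCases (fun i => ?_) (fun i => ?_) i <;>
        simp [Fin.append_left, Fin.append_right]
    have hmem : ((m + k : ℕ) : ℕ∞) ∈ S := ⟨m + k, rfl, F, hF⟩
    have hle : ((m + k : ℕ) : ℕ∞) ≤ (m : ℕ∞) := by
      have := le_sSup hmem
      rwa [show sSup S = corank G from rfl, h] at this
    have : m + k ≤ m := by exact_mod_cast hle
    have hk : k = 0 := by omega
    simp [hk]
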